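/- Let $F$ be a $3$-uniform hypergraph and let $H$ be a $3$-uniform hypergraph on vertex set $V(G)\cup\{z\}$ constructed from a graph $G$ as follows: $\{u,v,w\}\subseteq V(G)$ is an edge of $H$ iff $uv,uw,vw\in E(G)$, and for $u,v\in V(G)$, $\{u,v,z\}\in E(H)$ iff $uv\notin E(G)$. Suppose $F$ has the property that for every $v\in V(F)$ there exists $u\in V(F)$ with $N_F(v)\cap N_F(u)\ne\emptyset$. Then $H$ has no $F$-factor. In fact, no copy of $F$ in $H$ covers the vertex $z$. -/

import Mathlib

open Finset

lemma card3_ne {α : Type*} [DecidableEq α] {a b c : α}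
    (h : ({a, b, c} : Finset α).card = 3) : a ≠ b ∧ a ≠ c ∧ b ≠ c := by
  refine ⟨?_, ?_, ?_⟩
  · rintro rfl
    have h1 : ({a, a, c} : Finset α) ⊆ {a, c} := by intro t ht; simp at ht ⊢; tauto
    have h2 := Finset.card_le_card h1
    have h3 := Finset.card_insert_le a ({c} : Finset α)
    simp at h3
    omega
  · rintro rfl
    have h1 : ({a, b, a} : Finset α) ⊆ {a, b} := by intro t ht; simp at ht ⊢; tauto
    have h2 := Finset.card_le_card h1
    have h3 := Finset.card_insert_le a ({b} : Finset α)
    simp at h3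
    omega
  · rintro rfl
    have h1 : ({a, b, b} : Finset α) ⊆ {a, b} := by intro t ht; simp at ht ⊢; tauto
    have h2 := Finset.card_le_card h1
    have h3 := Finset.card_insert_le a ({b} : Finset α)
    simp at h3
    omega

theorem stmt10 (VF : Type) [Fintype VF] [DecidableEq VF]
    (EF : Finset (Finset VF)) (hEF : ∀ e ∈ EF, e.card = 3)
    -- every vertex of F has a partner sharing a neighbouring pair
    (hF : ∀ v : VF, ∃ u : VF, u ≠ v ∧ ∃ x y : VF, x ≠ y ∧
      ({v, x, y} : Finset VF) ∈ EF ∧ ({u, x, y} : Finset VF) ∈ EF)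
    (V : Type) [Fintype V] [DecidableEq V] (G : SimpleGraph V)
    (EH : Set (Finset (Option V)))
    (hEH : ∀ e : Finset (Option V), e ∈ EH ↔
      ((∃ u v w : V, G.Adj u v ∧ G.Adj u w ∧ G.Adj v w ∧
          e = ({some u, some v, some w} : Finset (Option V))) ∨
       (∃ u v : V, u ≠ v ∧ ¬ G.Adj u v ∧
          e = ({some u, some v, none} : Finset (Option V))))) :
    -- no copy of F in H covers the vertex z = none
    (¬ ∃ φ : VF → Option V, Function.Injective φ ∧
        (∀ e ∈ EF, e.image φ ∈ EH) ∧ none ∈ Set.range φ) ∧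
    -- H has no F-factor
    (¬ ∃ Fam : Finset (Finset (Option V)),
        (∀ P ∈ Fam, ∀ Q ∈ Fam, P ≠ Q → Disjoint P Q) ∧
        Fam.biUnion id = Finset.univ ∧
        (∀ P ∈ Fam, ∃ φ : VF → Option V, Function.Injective φ ∧
          Finset.image φ Finset.univ = P ∧ ∀ e ∈ EF, e.image φ ∈ EH)) := by
  have main : ¬ ∃ φ : VF → Option V, Function.Injective φ ∧
        (∀ e ∈ EF, e.image φ ∈ EH) ∧ none ∈ Set.range φ := by
    rintro ⟨φ, hinj, hmap, v, hv⟩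
    obtain ⟨u, huv, x, y, hxy, he1, he2⟩ := hF v
    obtain ⟨hvx, hvy, -⟩ := card3_ne (hEF _ he1)
    obtain ⟨hux, huy, -⟩ := card3_ne (hEF _ he2)
    have hφu : φ u ≠ none := fun h => huv (hinj (h.trans hv.symm))
    have hφx : φ x ≠ none := fun h => hvx (hinj (hv.trans h.symm))
    have hφy : φ y ≠ none := fun h => hvy (hinj (hv.trans h.symm))
    have hφxy : φ x ≠ φ y := fun h => hxy (hinj h)
    have him1 : ({v, x, y} : Finset VF).image φ = {none, φ x, φ y} := by
      simp [Finset.image_insert, hv]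
    have him2 : ({u, x, y} : Finset VF).image φ = {φ u, φ x, φ y} := by
      simp [Finset.image_insert]
    have h1 := (hEH _).1 (hmap _ he1)
    have h2 := (hEH _).1 (hmap _ he2)
    rw [him1] at h1
    rw [him2] at h2
    rcases h1 with ⟨a, b, c, -, -, -, hq⟩ | ⟨a, b, hab, hnadj, hq⟩
    · have hmem : (none : Option V) ∈ ({some a, some b, some c} : Finset (Option V)) := by
        rw [← hq]; simp
      simp at hmem
    · have hx1 : φ x = some a ∨ φ x = some b := by
        have hmem : φ x ∈ ({some a, some b, none} : Finset (Option V)) := by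
          rw [← hq]; simp
        simp only [Finset.mem_insert, Finset.mem_singleton] at hmem
        tauto
      have hy1 : φ y = some a ∨ φ y = some b := by
        have hmem : φ y ∈ ({some a, some b, none} : Finset (Option V)) := by
          rw [← hq]; simp
        simp only [Finset.mem_insert, Finset.mem_singleton] at hmem
        tauto
      rcases h2 with ⟨p, q, r, hpq, hpr, hqr, hq2⟩ | ⟨p, q, -, -, hq2⟩
      · have hx2 : ∀ s : V, φ x = some s → s = p ∨ s = q ∨ s = r := by
          intro s hs
          have hmem : φ x ∈ ({some p, some q, some r} : Finset (Option V)) := by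
            rw [← hq2]; simp
          rw [hs] at hmem
          simp only [Finset.mem_insert, Finset.mem_singleton, Option.some.injEq] at hmem
          exact hmem
        have hy2 : ∀ s : V, φ y = some s → s = p ∨ s = q ∨ s = r := by
          intro s hs
          have hmem : φ y ∈ ({some p, some q, some r} : Finset (Option V)) := by
            rw [← hq2]; simp
          rw [hs] at hmem
          simp only [Finset.mem_insert, Finset.mem_singleton, Option.some.injEq] at hmem
          exact hmem
        have key : ∀ s t : V, s ≠ t →
            (s = p ∨ s = q ∨ s = r) → (t = p ∨ t = q ∨ t = r) → G.Adj s t := by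
          rintro s t hst (rfl|rfl|rfl) (rfl|rfl|rfl) <;>
            first
            | exact absurd rfl hst
            | assumption
            | exact hpq.symm
            | exact hpr.symm
            | exact hqr.symm
        rcases hx1 with hxa | hxb <;> rcases hy1 with hya | hyb
        · exact hφxy (hxa.trans hya.symm)
        · exact hnadj (key a b hab (hx2 a hxa) (hy2 b hyb))
        · exact hnadj (G.adj_symm (key b a (Ne.symm hab) (hx2 b hxb) (hy2 a hya)))
        · exact hφxy (hxb.trans hyb.symm)
      · have hmem : (none : Option V) ∈ ({φ u, φ x, φ y} : Finset (Option V)) := by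
          rw [hq2]; simp
        simp only [Finset.mem_insert, Finset.mem_singleton] at hmem
        rcases hmem with h|h|h
        · exact hφu h.symm
        · exact hφx h.symm
        · exact hφy h.symm
  refine ⟨main, ?_⟩
  rintro ⟨Fam, -, hcov, hcopies⟩
  have hmem : (none : Option V) ∈ Fam.biUnion id := by rw [hcov]; exact Finset.mem_univ _
  simp only [Finset.mem_biUnion, id] at hmem
  obtain ⟨P, hP, hnP⟩ := hmem
  obtain ⟨φ, hinj, himg, hedges⟩ := hcopies P hP
  refine main ⟨φ, hinj, hedges, ?_⟩
  rw [← himg] at hnP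
  simp only [Finset.mem_image] at hnP
  obtain ⟨w, -, hw⟩ := hnP
  exact ⟨w, hw⟩
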